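/- Let p ∈ [1,2], let (X, 𝒜, μ) be a measure space and let (f_j)_{j≥1} be a sequence of measurable functions f_j : X → [0,∞). Then ∫ (∑_j f_j)^p dμ ≤ ∑_j ∫ f_j^p dμ + (2^p − 2) · ∑_{i<j} ∫ (f_i f_j)^{p/2} dμ, where the sums on the right range over all j ≥ 1 and all pairs i < j, and both sides are interpreted in [0,∞]. -/

import Mathlib

open MeasureTheory Real Set
open scoped ENNReal

lemma stmt11_aux_bern {p u : ℝ} (hp1 : 1 ≤ p) (hp2 : p ≤ 2) (hu0 : 0 ≤ u) :
    (1 + u) ^ (p - 1) ≤ 1 + (p - 1) * u := by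
  have h := Real.geom_mean_le_arith_mean2_weighted (w₁ := p - 1) (w₂ := 2 - p)
    (p₁ := 1 + u) (p₂ := 1) (by linarith) (by linarith) (by linarith) zero_le_one
    (by ring)
  rw [Real.one_rpow, mul_one] at h
  linarith

lemma stmt11_aux_pow {p u : ℝ} (hp1 : 1 ≤ p) (hp2 : p ≤ 2) (hu0 : 0 ≤ u) :
    u ^ p ≤ (2 - p) * u + (p - 1) * (u * u) := by
  rcases eq_or_lt_of_le hu0 with h | hu
  · rw [← h, Real.zero_rpow (by linarith)]; simp
  · have h := Real.geom_mean_le_arith_mean2_weighted (w₁ := p - 1) (w₂ := 2 - p)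
      (p₁ := u) (p₂ := 1) (by linarith) (by linarith) hu0 zero_le_one (by ring)
    rw [Real.one_rpow, mul_one] at h
    have hup : u ^ p = u * u ^ (p - 1) := by
      nth_rewrite 2 [← Real.rpow_one u]
      rw [← Real.rpow_add hu]; ring_nf
    nlinarith

-- key algebraic inequality
lemma stmt11_key_alg {p u : ℝ} (hp1 : 1 ≤ p) (hp2 : p ≤ 2) (hu0 : 0 ≤ u) (hu1 : u ≤ 1) :
    (1 - u) * (1 + u) ^ (p - 1) ≤ 1 - u ^ p := by
  have hA := stmt11_aux_bern hp1 hp2 hu0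
  have hB := stmt11_aux_pow hp1 hp2 hu0
  nlinarith [Real.rpow_nonneg (by linarith : (0:ℝ) ≤ 1 + u) (p - 1)]

noncomputable def stmt11_psi (p : ℝ) : ℝ → ℝ :=
  fun u => ((1 + u) ^ p - 1 - u ^ p) * u ^ (-(p / 2))

noncomputable def stmt11_D (p : ℝ) : ℝ → ℝ :=
  fun u => (p * (1 + u) ^ (p - 1) * 1 - p * u ^ (p - 1)) * u ^ (-(p / 2)) +
    ((1 + u) ^ p - 1 - u ^ p) * (-(p / 2) * u ^ (-(p / 2) - 1))

lemma stmt11_psi_hasDeriv {p u : ℝ} (hp1 : 1 ≤ p) (hu : 0 < u) :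
    HasDerivAt (stmt11_psi p) (stmt11_D p u) u := by
  have h1 : HasDerivAt (fun v : ℝ => (1 + v) ^ p) (p * (1 + u) ^ (p - 1) * 1) u := by
    exact (Real.hasDerivAt_rpow_const (x := 1 + u) (p := p)
      (Or.inl (by linarith))).comp u ((hasDerivAt_id u).const_add 1)
  have h2 : HasDerivAt (fun v : ℝ => v ^ p) (p * u ^ (p - 1)) u :=
    Real.hasDerivAt_rpow_const (Or.inl hu.ne')
  have h3 : HasDerivAt (fun v : ℝ => v ^ (-(p / 2))) (-(p / 2) * u ^ (-(p / 2) - 1)) u :=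
    Real.hasDerivAt_rpow_const (Or.inl hu.ne')
  exact ((h1.sub_const 1).sub h2).mul h3

lemma stmt11_D_nonneg {p u : ℝ} (hp1 : 1 ≤ p) (hp2 : p ≤ 2) (hu : 0 < u) (hu1 : u ≤ 1) :
    0 ≤ stmt11_D p u := by
  have key := stmt11_key_alg hp1 hp2 hu.le hu1
  have hsplit : (1 + u) ^ p = (1 + u) * (1 + u) ^ (p - 1) := by
    nth_rewrite 2 [← Real.rpow_one (1 + u)]
    rw [← Real.rpow_add (by linarith)]; ring_nf
  have hup : u ^ p = u * u ^ (p - 1) := by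
    nth_rewrite 2 [← Real.rpow_one u]
    rw [← Real.rpow_add hu]; ring_nf
  have hm : u ^ (-(p / 2)) = u ^ (-(p / 2) - 1) * u := by
    nth_rewrite 3 [← Real.rpow_one u]
    rw [← Real.rpow_add hu]; ring_nf
  have hpos : 0 < u ^ (-(p / 2) - 1) := Real.rpow_pos_of_pos hu _
  have hE : stmt11_D p u = u ^ (-(p / 2) - 1) *
      ((p / 2) * ((u - 1) * (1 + u) ^ (p - 1) + (1 - u ^ p))) := by
    unfold stmt11_D
    rw [hm, hsplit, hup]
    ring
  rw [hE]
  have : 0 ≤ (u - 1) * (1 + u) ^ (p - 1) + (1 - u ^ p) := by nlinarith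
  positivity

lemma stmt11_psi_le {p t : ℝ} (hp1 : 1 ≤ p) (hp2 : p ≤ 2) (ht : 0 < t) (ht1 : t ≤ 1) :
    stmt11_psi p t ≤ 2 ^ p - 2 := by
  have hmono : MonotoneOn (stmt11_psi p) (Set.Icc t 1) := by
    apply monotoneOn_of_deriv_nonneg (convex_Icc t 1)
    · intro u hu
      exact (stmt11_psi_hasDeriv hp1 (lt_of_lt_of_le ht hu.1)).continuousAt.continuousWithinAt
    · intro u hu
      rw [interior_Icc] at hu
      exact (stmt11_psi_hasDeriv hp1 (ht.trans hu.1)).differentiableAt.differentiableWithinAt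
    · intro u hu
      rw [interior_Icc] at hu
      rw [(stmt11_psi_hasDeriv hp1 (ht.trans hu.1)).deriv]
      exact stmt11_D_nonneg hp1 hp2 (ht.trans hu.1) hu.2.le
  have h := hmono (Set.mem_Icc.mpr ⟨le_refl t, ht1⟩) (Set.mem_Icc.mpr ⟨ht1, le_refl 1⟩) ht1
  have : stmt11_psi p 1 = 2 ^ p - 2 := by
    unfold stmt11_psi
    rw [Real.one_rpow, Real.one_rpow]
    norm_num
    ring
  linarith

lemma stmt11_key {p t : ℝ} (hp1 : 1 ≤ p) (hp2 : p ≤ 2) (ht : 0 ≤ t) (ht1 : t ≤ 1) :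
    (1 + t) ^ p ≤ 1 + t ^ p + (2 ^ p - 2) * t ^ (p / 2) := by
  rcases eq_or_lt_of_le ht with h | ht
  · rw [← h]
    rw [Real.zero_rpow (by linarith), Real.zero_rpow (by positivity)]
    norm_num
  · have h := stmt11_psi_le hp1 hp2 ht ht1
    unfold stmt11_psi at h
    have hpos : 0 < t ^ (p / 2) := Real.rpow_pos_of_pos ht _
    have hcancel : t ^ (-(p / 2)) * t ^ (p / 2) = 1 := by
      rw [← Real.rpow_add ht]; simp
    have h2 := mul_le_mul_of_nonneg_right h hpos.le
    rw [mul_assoc, hcancel, mul_one] at h2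
    linarith

lemma stmt11_two_point_aux {p a b : ℝ} (hp1 : 1 ≤ p) (hp2 : p ≤ 2)
    (ha : 0 ≤ a) (hab : a ≤ b) :
    (a + b) ^ p ≤ a ^ p + b ^ p + (2 ^ p - 2) * (a * b) ^ (p / 2) := by
  have hb : 0 ≤ b := ha.trans hab
  rcases eq_or_lt_of_le hb with h | hb
  · have ha0 : a = 0 := le_antisymm (hab.trans h.symm.le) ha
    have hp0 : p ≠ 0 := by linarith
    have hp0' : p / 2 ≠ 0 := by positivity
    rw [ha0, ← h]
    norm_num [Real.zero_rpow hp0, Real.zero_rpow hp0']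
  · set t := a / b with ht_def
    have ht0 : 0 ≤ t := div_nonneg ha hb.le
    have ht1 : t ≤ 1 := (div_le_one hb).mpr hab
    have hat : a = t * b := (div_mul_cancel₀ a hb.ne').symm
    have key := stmt11_key hp1 hp2 ht0 ht1
    have hbp : (0:ℝ) < b ^ p := Real.rpow_pos_of_pos hb _
    have e1 : (a + b) ^ p = (1 + t) ^ p * b ^ p := by
      rw [hat, ← Real.mul_rpow (by linarith) hb.le]
      ring_nf
    have e2 : a ^ p = t ^ p * b ^ p := by
      rw [hat, Real.mul_rpow ht0 hb.le]
    have e3 : (a * b) ^ (p / 2) = t ^ (p / 2) * b ^ p := by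
      rw [hat, mul_assoc, Real.mul_rpow ht0 (by positivity)]
      congr 1
      have hbb : b * b = b ^ (2:ℝ) := by
        rw [show (2:ℝ) = ((2:ℕ):ℝ) by norm_num, Real.rpow_natCast]
        ring
      rw [hbb, ← Real.rpow_mul hb.le]
      ring_nf
    rw [e1, e2, e3]
    nlinarith [mul_le_mul_of_nonneg_right key hbp.le]

lemma stmt11_two_point_real {p a b : ℝ} (hp1 : 1 ≤ p) (hp2 : p ≤ 2)
    (ha : 0 ≤ a) (hb : 0 ≤ b) :
    (a + b) ^ p ≤ a ^ p + b ^ p + (2 ^ p - 2) * (a * b) ^ (p / 2) := by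
  rcases le_total a b with h | h
  · exact stmt11_two_point_aux hp1 hp2 ha h
  · have := stmt11_two_point_aux hp1 hp2 hb h
    rw [add_comm b a, mul_comm b a] at this
    linarith

lemma stmt11_c_nonneg {p : ℝ} (hp1 : 1 ≤ p) : (0:ℝ) ≤ 2 ^ p - 2 := by
  have : (2:ℝ) ^ (1:ℝ) ≤ 2 ^ p := Real.rpow_le_rpow_of_exponent_le (by norm_num) hp1
  rw [Real.rpow_one] at this
  linarith

lemma stmt11_two_point {p : ℝ} (hp1 : 1 ≤ p) (hp2 : p ≤ 2) (a b : ℝ≥0∞)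
    (ha : a ≠ ∞) (hb : b ≠ ∞) :
    (a + b) ^ p ≤ a ^ p + b ^ p +
      ENNReal.ofReal ((2:ℝ) ^ p - 2) * (a * b) ^ (p / 2) := by
  have hA : a = ENNReal.ofReal a.toReal := (ENNReal.ofReal_toReal ha).symm
  have hB : b = ENNReal.ofReal b.toReal := (ENNReal.ofReal_toReal hb).symm
  set A := a.toReal with hA'
  set B := b.toReal with hB'
  have hA0 : 0 ≤ A := ENNReal.toReal_nonneg
  have hB0 : 0 ≤ B := ENNReal.toReal_nonneg
  rw [hA, hB, ← ENNReal.ofReal_add hA0 hB0, ← ENNReal.ofReal_mul hA0]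
  rw [ENNReal.ofReal_rpow_of_nonneg (by linarith) (by linarith),
    ENNReal.ofReal_rpow_of_nonneg hA0 (by linarith),
    ENNReal.ofReal_rpow_of_nonneg hB0 (by linarith),
    ENNReal.ofReal_rpow_of_nonneg (mul_nonneg hA0 hB0) (by linarith)]
  rw [← ENNReal.ofReal_mul (stmt11_c_nonneg hp1)]
  rw [← ENNReal.ofReal_add (by positivity) (by positivity)]
  rw [← ENNReal.ofReal_add (by positivity)
    (mul_nonneg (stmt11_c_nonneg hp1) (Real.rpow_nonneg (mul_nonneg hA0 hB0) _))]
  exact ENNReal.ofReal_le_ofReal (stmt11_two_point_real hp1 hp2 hA0 hB0)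

lemma stmt11_rpow_sum_le {p : ℝ} (hp0 : 0 < p) (hp1 : p ≤ 1) (n : ℕ) (a : ℕ → ℝ≥0∞) :
    (∑ i ∈ Finset.range n, a i) ^ p ≤ ∑ i ∈ Finset.range n, (a i) ^ p := by
  induction n with
  | zero => simp [ENNReal.zero_rpow_of_pos hp0]
  | succ n ih =>
    rw [Finset.sum_range_succ, Finset.sum_range_succ]
    calc (∑ i ∈ Finset.range n, a i + a n) ^ p
        ≤ (∑ i ∈ Finset.range n, a i) ^ p + (a n) ^ p :=
          ENNReal.rpow_add_le_add_rpow _ _ hp0.le hp1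
      _ ≤ _ := add_le_add ih le_rfl

lemma stmt11_finset {p : ℝ} (hp1 : 1 ≤ p) (hp2 : p ≤ 2) (a : ℕ → ℝ≥0∞)
    (hfin : ∀ j, a j ≠ ∞) (n : ℕ) :
    (∑ j ∈ Finset.range n, a j) ^ p ≤
      ∑ j ∈ Finset.range n, (a j) ^ p +
        ENNReal.ofReal ((2:ℝ) ^ p - 2) *
          ∑ i ∈ Finset.range n, ∑ j ∈ Finset.range n,
            (if i < j then (a i * a j) ^ (p / 2) else 0) := by
  induction n with
  | zero => simp [ENNReal.zero_rpow_of_pos (by linarith : (0:ℝ) < p)]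
  | succ n ih =>
    set S := ∑ j ∈ Finset.range n, a j with hS
    have hSfin : S ≠ ∞ := by
      rw [hS]
      exact (ENNReal.sum_lt_top.mpr fun j _ => (hfin j).lt_top).ne
    set C := ENNReal.ofReal ((2:ℝ) ^ p - 2) with hC
    -- double sum bookkeeping
    have hD : ∑ i ∈ Finset.range (n+1), ∑ j ∈ Finset.range (n+1),
        (if i < j then (a i * a j) ^ (p / 2) else 0) =
        (∑ i ∈ Finset.range n, ∑ j ∈ Finset.range n,
          (if i < j then (a i * a j) ^ (p / 2) else 0)) +
        ∑ i ∈ Finset.range n, (a i * a n) ^ (p / 2) := by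
      rw [Finset.sum_range_succ]
      have hlast : ∑ j ∈ Finset.range (n+1),
          (if n < j then (a n * a j) ^ (p / 2) else 0) = 0 := by
        apply Finset.sum_eq_zero
        intro j hj
        rw [Finset.mem_range] at hj
        rw [if_neg (by omega)]
      rw [hlast, add_zero]
      rw [← Finset.sum_add_distrib]
      apply Finset.sum_congr rfl
      intro i hi
      rw [Finset.mem_range] at hi
      rw [Finset.sum_range_succ, if_pos hi]
    rw [Finset.sum_range_succ, Finset.sum_range_succ (f := fun j => (a j) ^ p), hD]
    calc (S + a n) ^ p
        ≤ S ^ p + (a n) ^ p + C * (S * a n) ^ (p / 2) :=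
          stmt11_two_point hp1 hp2 S (a n) hSfin (hfin n)
      _ ≤ S ^ p + (a n) ^ p + C * ∑ i ∈ Finset.range n, (a i * a n) ^ (p / 2) := by
          gcongr
          rw [hS, Finset.sum_mul]
          exact stmt11_rpow_sum_le (by linarith) (by linarith) n (fun i => a i * a n)
      _ ≤ _ := by
          have := ih
          calc S ^ p + (a n) ^ p + C * ∑ i ∈ Finset.range n, (a i * a n) ^ (p / 2)
              ≤ (∑ j ∈ Finset.range n, (a j) ^ p +
                  C * ∑ i ∈ Finset.range n, ∑ j ∈ Finset.range n,
                    (if i < j then (a i * a j) ^ (p / 2) else 0)) + (a n) ^ p +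
                  C * ∑ i ∈ Finset.range n, (a i * a n) ^ (p / 2) := by gcongr
            _ = _ := by rw [mul_add]; ring

lemma stmt11_pointwise {p : ℝ} (hp1 : 1 ≤ p) (hp2 : p ≤ 2) (a : ℕ → ℝ≥0∞)
    (hfin : ∀ j, a j ≠ ∞) :
    (∑' j, a j) ^ p ≤
      ∑' j, (a j) ^ p +
        ENNReal.ofReal ((2:ℝ) ^ p - 2) *
          ∑' (i : ℕ) (j : ℕ), (if i < j then (a i * a j) ^ (p / 2) else 0) := by
  have htend : Filter.Tendsto (fun n => (∑ j ∈ Finset.range n, a j) ^ p)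
      Filter.atTop (nhds ((∑' j, a j) ^ p)) :=
    (ENNReal.continuous_rpow_const.tendsto _).comp (ENNReal.tendsto_nat_tsum a)
  refine le_of_tendsto htend (Filter.Eventually.of_forall fun n => ?_)
  refine (stmt11_finset hp1 hp2 a hfin n).trans ?_
  gcongr with j hj
  · exact ENNReal.sum_le_tsum _
  · calc ∑ i ∈ Finset.range n, ∑ j ∈ Finset.range n,
        (if i < j then (a i * a j) ^ (p / 2) else 0)
        ≤ ∑ i ∈ Finset.range n, ∑' (j : ℕ),
            (if i < j then (a i * a j) ^ (p / 2) else 0) := by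
          gcongr with i hi
          exact ENNReal.sum_le_tsum _
      _ ≤ _ := ENNReal.sum_le_tsum _

/-- Corollary 2 (upper bound), for `p ∈ [1,2]` and a sequence of nonnegative functions:
`‖∑_j f_j‖_p^p ≤ ∑_j ‖f_j‖_p^p + (2^p - 2) ∑_{i<j} ‖f_i f_j‖_{p/2}^{p/2}`,
with both sides interpreted in `[0,∞]`. -/
theorem statement11
    {X : Type*} [MeasurableSpace X] (μ : Measure X) (p : ℝ)
    (hp : p ∈ Set.Icc (1 : ℝ) 2)
    (f : ℕ → X → ℝ≥0∞) (hf : ∀ j, Measurable (f j)) (hffin : ∀ j x, f j x ≠ ∞) :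
    ∫⁻ x, (∑' j, f j x) ^ p ∂μ ≤
      (∑' j, ∫⁻ x, f j x ^ p ∂μ) +
        ENNReal.ofReal ((2 : ℝ) ^ p - 2) *
          ∑' (i : ℕ) (j : ℕ), if i < j then ∫⁻ x, (f i x * f j x) ^ (p / 2) ∂μ else 0 := by
  obtain ⟨hp1, hp2⟩ := hp
  set C := ENNReal.ofReal ((2:ℝ) ^ p - 2) with hC
  have step1 : ∫⁻ x, (∑' j, f j x) ^ p ∂μ ≤
      ∫⁻ x, (∑' j, (f j x) ^ p +
        C * ∑' (i : ℕ) (j : ℕ), (if i < j then (f i x * f j x) ^ (p / 2) else 0)) ∂μ :=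
    lintegral_mono fun x => stmt11_pointwise hp1 hp2 (fun j => f j x) (fun j => hffin j x)
  refine step1.trans ?_
  have hmeas1 : ∀ j, Measurable fun x => (f j x) ^ p := fun j =>
    ENNReal.continuous_rpow_const.measurable.comp (hf j)
  have hmeas2 : ∀ i j : ℕ, Measurable fun x =>
      (if i < j then (f i x * f j x) ^ (p / 2) else 0 : ℝ≥0∞) := by
    intro i j
    by_cases h : i < j
    · simp only [if_pos h]
      exact ENNReal.continuous_rpow_const.measurable.comp ((hf i).mul (hf j))
    · simp only [if_neg h]; exact measurable_const
  have hmeas3 : ∀ i : ℕ, Measurable fun x =>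
      ∑' (j : ℕ), (if i < j then (f i x * f j x) ^ (p / 2) else 0 : ℝ≥0∞) := fun i =>
    Measurable.ennreal_tsum (hmeas2 i)
  have hmeas4 : Measurable fun x =>
      ∑' (i : ℕ) (j : ℕ), (if i < j then (f i x * f j x) ^ (p / 2) else 0 : ℝ≥0∞) :=
    Measurable.ennreal_tsum hmeas3
  rw [lintegral_add_left (Measurable.ennreal_tsum hmeas1)]
  rw [lintegral_const_mul' C _ ENNReal.ofReal_ne_top]
  gcongr
  · rw [lintegral_tsum (fun j => (hmeas1 j).aemeasurable)]
  · rw [lintegral_tsum (fun i => (hmeas3 i).aemeasurable)]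
    apply ENNReal.tsum_le_tsum
    intro i
    rw [lintegral_tsum (fun j => (hmeas2 i j).aemeasurable)]
    apply ENNReal.tsum_le_tsum
    intro j
    by_cases h : i < j
    · simp only [if_pos h]; exact le_refl _
    · simp only [if_neg h, lintegral_const, zero_mul]
      exact le_refl _
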